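/- Let F be a field, let R = F[X; ℚ≥0] be the additive monoid ring of the monoid of nonnegative rationals over F, let m be the maximal ideal of R consisting of all elements with zero constant term, and let D = R_m be the localization of R at m. Then the maximal ideal mR_m of D is not finitely generated; in particular D does not satisfy the MIP condition. -/

import Mathlib

open scoped Classical

/-- The "constant term" homomorphism of a monoid algebra `F[X; M]`, for a monoid `M` in
which `a + b = 0` forces `a = b = 0`; it sends `a₁X^{α₁} + ⋯ + aₙX^{αₙ}` to its
coefficient at the identity `0` of `M` (see `constantTermHom_apply`). -/
noncomputable def constantTermHom (F M : Type*) [Field F] [AddCommMonoid M]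
    (hM : ∀ a b : M, a + b = 0 → a = 0 ∧ b = 0) : AddMonoidAlgebra F M →ₐ[F] F :=
  AddMonoidAlgebra.lift F F M
    { toFun := fun a => if a.toAdd = 0 then 1 else 0
      map_one' := by simp
      map_mul' := fun a b => by
        rcases em (a.toAdd = 0) with ha | ha
        · rcases em (b.toAdd = 0) with hb | hb
          · simp [ha, hb]
          · have h : a.toAdd + b.toAdd ≠ 0 := fun h => hb (hM _ _ h).2
            simp [ha, hb, toAdd_mul, h]
        · have h : a.toAdd + b.toAdd ≠ 0 := fun h => ha (hM _ _ h).1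
          simp [ha, toAdd_mul, h] }

theorem constantTermHom_apply (F M : Type*) [Field F] [AddCommMonoid M]
    (hM : ∀ a b : M, a + b = 0 → a = 0 ∧ b = 0) (f : AddMonoidAlgebra F M) :
    constantTermHom F M hM f = f.coeff 0 := by
  classical
  rw [constantTermHom, AddMonoidAlgebra.lift_apply]
  simp only [MonoidHom.coe_mk, OneHom.coe_mk, toAdd_ofAdd, smul_eq_mul, mul_ite, mul_one,
    mul_zero]
  rw [Finsupp.sum_ite_eq' f.coeff 0 (fun _ b => b)]
  split
  · rfl
  · next h => exact (Finsupp.notMem_support_iff.mp h).symm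

/-- The augmentation ideal of the monoid algebra `F[X; M]`, consisting of all elements
with zero constant term (zero coefficient at the identity of `M`). -/
noncomputable def augIdeal (F M : Type*) [Field F] [AddCommMonoid M]
    (hM : ∀ a b : M, a + b = 0 → a = 0 ∧ b = 0) : Ideal (AddMonoidAlgebra F M) :=
  RingHom.ker (constantTermHom F M hM)

theorem mem_augIdeal_iff (F M : Type*) [Field F] [AddCommMonoid M]
    (hM : ∀ a b : M, a + b = 0 → a = 0 ∧ b = 0) (f : AddMonoidAlgebra F M) :
    f ∈ augIdeal F M hM ↔ f.coeff 0 = 0 := by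
  rw [augIdeal, RingHom.mem_ker, constantTermHom_apply]

/-- The augmentation ideal is a maximal ideal. -/
instance augIdeal_isMaximal (F M : Type*) [Field F] [AddCommMonoid M]
    {hM : ∀ a b : M, a + b = 0 → a = 0 ∧ b = 0} : (augIdeal F M hM).IsMaximal :=
  RingHom.ker_isMaximal_of_surjective _ (fun c =>
    ⟨AddMonoidAlgebra.single 0 c, by simp [constantTermHom]⟩)

theorem nnrat_pos_monoid : ∀ a b : ℚ≥0, a + b = 0 → a = 0 ∧ b = 0 :=
  fun _ _ h => add_eq_zero.mp h


theorem augIdeal_le_sq (F : Type*) [Field F] :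
    augIdeal F ℚ≥0 nnrat_pos_monoid ≤
      augIdeal F ℚ≥0 nnrat_pos_monoid * augIdeal F ℚ≥0 nnrat_pos_monoid := by
  intro f hf
  rw [mem_augIdeal_iff] at hf
  have hf' : f = ∑ a ∈ f.coeff.support, AddMonoidAlgebra.single a (f.coeff a) := by
    conv_lhs => rw [← AddMonoidAlgebra.sum_coeff_single f]
    rfl
  rw [hf']
  refine Ideal.sum_mem _ (fun a ha => ?_)
  have ha0 : a ≠ 0 := fun h => (Finsupp.mem_support_iff.mp ha) (h ▸ hf)
  have key : AddMonoidAlgebra.single a (f.coeff a) =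
      AddMonoidAlgebra.single (a/2) (f.coeff a) * AddMonoidAlgebra.single (a/2) 1 := by
    rw [AddMonoidAlgebra.single_mul_single, mul_one]
    congr 1
    field_simp
    norm_num
  rw [key]
  exact Ideal.mul_mem_mul
    (by rw [mem_augIdeal_iff]; simp [AddMonoidAlgebra.coeff_single, Finsupp.single_apply, ha0])
    (by rw [mem_augIdeal_iff]; simp [AddMonoidAlgebra.coeff_single, Finsupp.single_apply, ha0])

/-- Let `F` be a field, `R = F[X; ℚ≥0]` the monoid ring of the additive
monoid of nonnegative rationals, `m` its maximal ideal of elements with zero constant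
term, and `D = R_m`. Then the maximal ideal `mR_m` of `D` is not finitely generated;
in particular `D` does not satisfy the MIP condition (not every maximal ideal of `D`
is principal). -/
theorem localization_monoidAlgebra_nnrat_not_mip (F : Type*) [Field F] :
    ¬(Ideal.map (algebraMap (AddMonoidAlgebra F ℚ≥0)
        (Localization.AtPrime (augIdeal F ℚ≥0 nnrat_pos_monoid)))
        (augIdeal F ℚ≥0 nnrat_pos_monoid)).FG ∧
    ¬(∀ I : Ideal (Localization.AtPrime (augIdeal F ℚ≥0 nnrat_pos_monoid)),
        I.IsMaximal → I.IsPrincipal) := by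
  classical
  set R := AddMonoidAlgebra F ℚ≥0
  set m := augIdeal F ℚ≥0 nnrat_pos_monoid
  set D := Localization.AtPrime m
  set J : Ideal D := Ideal.map (algebraMap R D) m with hJ
  have hnFG : ¬ J.FG := by
    intro hFG
    have h1 : m = m * m :=
      le_antisymm (augIdeal_le_sq F)
        (Ideal.mul_le.mpr fun a _ b hb => Ideal.mul_mem_left _ _ hb)
    have hJsq : J = J * J := by rw [hJ, ← Ideal.map_mul, ← h1]
    have hbot : J = ⊥ := by
      refine Submodule.eq_bot_of_le_smul_of_le_jacobson_bot J J hFG ?_ ?_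
      · rw [Ideal.smul_eq_mul, ← hJsq]
      · rw [hJ, Localization.AtPrime.map_eq_maximalIdeal]
        exact (IsLocalRing.jacobson_eq_maximalIdeal ⊥ bot_ne_top).ge
    have hinj : Function.Injective (algebraMap R D) :=
      IsLocalization.injective D (le_nonZeroDivisors_of_noZeroDivisors
        (show (0 : R) ∉ m.primeCompl from fun h =>
          h ((mem_augIdeal_iff F ℚ≥0 nnrat_pos_monoid 0).mpr rfl)))
    have hx : (AddMonoidAlgebra.single 1 1 : R) ∈ m := by
      rw [mem_augIdeal_iff]
      simp [AddMonoidAlgebra.coeff_single, Finsupp.single_apply]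
    have hz : algebraMap R D (AddMonoidAlgebra.single 1 1) = 0 := by
      have h2 := Ideal.mem_map_of_mem (algebraMap R D) hx
      rw [← hJ, hbot] at h2
      exact (Submodule.mem_bot D).mp h2
    have h3 := hinj (hz.trans (map_zero (algebraMap R D)).symm)
    exact one_ne_zero ((AddMonoidAlgebra.single_eq_zero.mp h3).symm ▸ rfl : (1 : F) = 0)
  refine ⟨hnFG, fun hMIP => hnFG ?_⟩
  rw [hJ, Localization.AtPrime.map_eq_maximalIdeal]
  exact (hMIP _ (IsLocalRing.maximalIdeal.isMaximal _)).fg
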